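/- In a ℂ-linear abelian category in which all objects have finite length and Hom-spaces are finite-dimensional, every short exact sequence 0 → A → E → B → 0 with E ≅ A ⊕ B splits. -/

import Mathlib

open CategoryTheory CategoryTheory.Limits

/-- Hom into a biproduct is linearly equivalent to the product of Homs. -/
noncomputable def biprodHomLEquiv {C : Type*} [Category C] [Preadditive C] [Linear ℂ C]
    [HasBinaryBiproducts C] (W X Y : C) :
    (W ⟶ X ⊞ Y) ≃ₗ[ℂ] (W ⟶ X) × (W ⟶ Y) where
  toFun s := (s ≫ biprod.fst, s ≫ biprod.snd)
  map_add' s t := by simp [Preadditive.add_comp]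
  map_smul' r s := by simp [Linear.smul_comp]
  invFun p := biprod.lift p.1 p.2
  left_inv s := by apply biprod.hom_ext <;> simp
  right_inv p := by simp

/-- In a `ℂ`-linear abelian category with finite length objects and finite-dimensional
Hom-spaces, any short exact sequence `0 → A → E → B → 0` with `E ≅ A ⊕ B` splits. -/
theorem stmt4 {C : Type*} [Category C] [Abelian C] [Linear ℂ C]
    [∀ X Y : C, FiniteDimensional ℂ (X ⟶ Y)]
    [∀ X : C, IsArtinianObject X] [∀ X : C, IsNoetherianObject X]
    (S : ShortComplex C) (hS : S.ShortExact)
    (hiso : Nonempty (S.X₂ ≅ S.X₁ ⊞ S.X₃)) :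
    ∃ s : S.X₃ ⟶ S.X₂, s ≫ S.g = 𝟙 S.X₃ := by
  obtain ⟨e⟩ := hiso
  have hmono : Mono S.f := hS.mono_f
  set φ : (S.X₃ ⟶ S.X₂) →ₗ[ℂ] (S.X₃ ⟶ S.X₃) := Linear.rightComp ℂ _ S.g with hφ
  set ψ : (S.X₃ ⟶ S.X₁) →ₗ[ℂ] (S.X₃ ⟶ S.X₂) := Linear.rightComp ℂ _ S.f with hψdef
  have hker : LinearMap.ker φ = LinearMap.range ψ := by
    ext s
    simp only [LinearMap.mem_ker, LinearMap.mem_range, hφ, hψdef, Linear.rightComp_apply]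
    constructor
    · intro hs
      exact ⟨hS.exact.lift s hs, hS.exact.lift_f s hs⟩
    · rintro ⟨t, rfl⟩
      rw [Category.assoc, S.zero, Limits.comp_zero]
  have hψ : Function.Injective ψ := by
    intro a b h
    simp only [hψdef, Linear.rightComp_apply] at h
    exact (cancel_mono S.f).1 h
  -- dimension count
  have hdim2 : Module.finrank ℂ (S.X₃ ⟶ S.X₂)
      = Module.finrank ℂ (S.X₃ ⟶ S.X₁) + Module.finrank ℂ (S.X₃ ⟶ S.X₃) := by
    rw [LinearEquiv.finrank_eq ((Linear.homCongr ℂ (Iso.refl S.X₃) e).trans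
      (biprodHomLEquiv S.X₃ S.X₁ S.X₃)), Module.finrank_prod]
  have hkerdim : Module.finrank ℂ (LinearMap.ker φ) = Module.finrank ℂ (S.X₃ ⟶ S.X₁) := by
    rw [hker, ← LinearEquiv.finrank_eq (LinearEquiv.ofInjective ψ hψ)]
  have hrn := LinearMap.finrank_range_add_finrank_ker φ
  have hrange : Module.finrank ℂ (LinearMap.range φ) = Module.finrank ℂ (S.X₃ ⟶ S.X₃) := by
    omega
  have htop : LinearMap.range φ = ⊤ := Submodule.eq_top_of_finrank_eq hrange
  have : (𝟙 S.X₃ : S.X₃ ⟶ S.X₃) ∈ LinearMap.range φ := htop ▸ Submodule.mem_top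
  obtain ⟨s, hs⟩ := this
  exact ⟨s, hs⟩
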